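/- arXiv:2102.11485 — 2 statements merged into one kernel-verified Lean document; each statement's English description precedes it below -/
import Mathlib

section
/- Let n, k be natural numbers and f : Matrix (Fin n) (Fin n) ℝ → Matrix (Fin n) (Fin k) ℝ be equivariant, i.e., f(π • Z) = π • f(Z) for every permutation π and every Z. Let X : Matrix (Fin n) (Fin n) ℝ be such that its automorphism group acts transitively on nodes, i.e., for all i, j : Fin n there exists a permutation τ with τ • X = X and τ i = j. Then all rows of f(X) are equal: for all i, j : Fin n and c : Fin k, (f X) i c = (f X) j c. (An equivariant GNN must assign the same prediction to every node of a vertex-transitive graph, so it cannot output any nontrivial node subset such as a maximum independent set.) -/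
/-- Action of a permutation on an adjacency matrix: `(π • X) i j = X (π⁻¹ i) (π⁻¹ j)`. -/
def permX {n : ℕ} (π : Equiv.Perm (Fin n)) (X : Matrix (Fin n) (Fin n) ℝ) :
    Matrix (Fin n) (Fin n) ℝ :=
  fun i j => X (π⁻¹ i) (π⁻¹ j)

/-- Action of a permutation on an output matrix: `(π • Y) i c = Y (π⁻¹ i) c`. -/
def permY {n k : ℕ} (π : Equiv.Perm (Fin n)) (Y : Matrix (Fin n) (Fin k) ℝ) :
    Matrix (Fin n) (Fin k) ℝ :=
  fun i c => Y (π⁻¹ i) c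

theorem stmt_7 (n k : ℕ)
    (f : Matrix (Fin n) (Fin n) ℝ → Matrix (Fin n) (Fin k) ℝ)
    (hequiv : ∀ (π : Equiv.Perm (Fin n)) (Z : Matrix (Fin n) (Fin n) ℝ),
      f (permX π Z) = permY π (f Z))
    (X : Matrix (Fin n) (Fin n) ℝ)
    (htrans : ∀ i j : Fin n, ∃ τ : Equiv.Perm (Fin n), permX τ X = X ∧ τ i = j) :
    ∀ (i j : Fin n) (c : Fin k), f X i c = f X j c := by
  intro i j c
  obtain ⟨τ, hτX, hτij⟩ := htrans i j
  have h := hequiv τ X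
  rw [hτX] at h
  have : f X j c = permY τ (f X) j c := by rw [← h]
  rw [this]
  simp [permY, ← hτij]
end

section
/- Let n ≥ 3 and let X : Matrix (Fin n) (Fin n) ℝ be the adjacency matrix of the n-cycle, i.e., X i j = 1 if j = i + 1 or i = j + 1 (addition in Fin n, i.e., modulo n) and X i j = 0 otherwise. Then the rotation permutation r : Fin n → Fin n, r i = i + 1, satisfies r • X = X, and consequently for any equivariant function f : Matrix (Fin n) (Fin n) ℝ → Matrix (Fin n) (Fin k) ℝ (i.e., f(π • Z) = π • f(Z) for all π and Z), all rows of f(X) are equal. (This generalizes the paper's C₄ example: an equivariant GNN cannot predict any maximum independent set of a cycle because auto-isomorphism ties the output of all nodes.) -/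
theorem stmt_8 (n k : ℕ) [NeZero n] (hn : 3 ≤ n)
    (X : Matrix (Fin n) (Fin n) ℝ)
    (hX : ∀ i j : Fin n, X i j = if j = i + 1 ∨ i = j + 1 then (1 : ℝ) else 0)
    (r : Equiv.Perm (Fin n)) (hr : ∀ i : Fin n, r i = i + 1) :
    permX r X = X ∧
      ∀ f : Matrix (Fin n) (Fin n) ℝ → Matrix (Fin n) (Fin k) ℝ,
        (∀ (π : Equiv.Perm (Fin n)) (Z : Matrix (Fin n) (Fin n) ℝ),
          f (permX π Z) = permY π (f Z)) →
        ∀ (i j : Fin n) (c : Fin k), f X i c = f X j c := by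
  have hrinv : ∀ i : Fin n, r⁻¹ i = i - 1 := by
    intro i
    apply r.injective
    rw [show r (r⁻¹ i) = i from r.apply_symm_apply i, hr, sub_add_cancel]
  have hfix : permX r X = X := by
    funext i j
    simp only [permX, hrinv, hX]
    congr 1
    simp only [eq_iff_iff]
    constructor
    · rintro (h | h)
      · left; have := congrArg (· + 1) h; simpa [sub_add_cancel] using this
      · right; have := congrArg (· + 1) h; simpa [sub_add_cancel] using this
    · rintro (h | h)
      · left; rw [h]; abel
      · right; rw [h]; abel
  refine ⟨hfix, ?_⟩
  intro f hf i j c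
  have hstep : ∀ i : Fin n, f X i c = f X (i - 1) c := by
    intro i
    have := hf r X
    rw [hfix] at this
    have := congrFun (congrFun this i) c
    simpa [permY, hrinv] using this
  have hstep' : ∀ i : Fin n, f X (i + 1) c = f X i c := by
    intro i; simpa using hstep (i + 1)
  open Fin.NatCast in
  have key : ∀ m : ℕ, f X (m : Fin n) c = f X 0 c := by
    intro m
    induction m with
    | zero => simp
    | succ m ih => rw [Nat.cast_succ, hstep', ih]
  have hi := key i.val
  have hj := key j.val
  rw [Fin.cast_val_eq_self] at hi hj
  rw [hi, hj]
end
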